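/- Let u : ℝ → ℝ be twice differentiable and satisfy the homogeneous Painlevé II equation u''(x) = 2u(x)³ + x·u(x) for all x ∈ ℝ. Assume ∫ₓ^∞ u(t)² dt < ∞ for every x, and that u(x) → 0, u'(x) → 0 and x·u(x)² → 0 as x → +∞. Then for every x ∈ ℝ, u'(x)² = u(x)⁴ + x·u(x)² + ∫ₓ^∞ u(t)² dt; equivalently, with v(x) = ∫ₓ^∞ u², the quantity v(x) + u(x)⁴ − u'(x)² + x·u(x)² is identically zero. -/

import Mathlib

open MeasureTheory Set Filter

/-- First integral for Painlevé II: if `u'' = 2u³ + xu` and `u`, `u'`,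
`x·u²` all tend to `0` at `+∞` with `∫ₓ^∞ u² < ∞`, then
`u'(x)² = u(x)⁴ + x·u(x)² + ∫ₓ^∞ u²` for every `x`; equivalently
`v + u⁴ − u'² + xu² ≡ 0` where `v(x) = ∫ₓ^∞ u²`. -/
theorem stmt_15 (u u' : ℝ → ℝ)
    (hu : ∀ x, HasDerivAt u (u' x) x)
    (hu'' : ∀ x, HasDerivAt u' (2 * u x ^ 3 + x * u x) x)
    (hint : ∀ x : ℝ, Integrable (fun t => u t ^ 2) (volume.restrict (Ioi x)))
    (h1 : Tendsto u atTop (nhds 0))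
    (h2 : Tendsto u' atTop (nhds 0))
    (h3 : Tendsto (fun x => x * u x ^ 2) atTop (nhds 0)) :
    ∀ x : ℝ, u' x ^ 2 = u x ^ 4 + x * u x ^ 2 + ∫ t in Ioi x, u t ^ 2 := by
  intro x
  set E : ℝ → ℝ := fun y => u' y ^ 2 - u y ^ 4 - y * u y ^ 2 with hEdef
  have hucont : Continuous u := Differentiable.continuous (fun y => (hu y).differentiableAt)
  have hu2cont : Continuous fun t => u t ^ 2 := hucont.pow 2
  have hE : ∀ y, HasDerivAt E (-(u y ^ 2)) y := by
    intro y
    have h := (((hu'' y).pow 2).sub ((hu y).pow 4)).sub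
      ((hasDerivAt_id y).mul ((hu y).pow 2))
    convert h using 1
    all_goals try rfl
    simp only [id_eq, Nat.cast_ofNat, Pi.pow_apply]
    ring
  set G : ℝ → ℝ := fun y => ∫ t in x..y, u t ^ 2 with hGdef
  have hG : ∀ y, HasDerivAt G (u y ^ 2) y := by
    intro y
    exact intervalIntegral.integral_hasDerivAt_right
      (hu2cont.intervalIntegrable x y)
      (hu2cont.stronglyMeasurableAtFilter _ _)
      hu2cont.continuousAt
  set F : ℝ → ℝ := fun y => E y + G y with hFdef
  have hF : ∀ y, HasDerivAt F 0 y := by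
    intro y
    have := (hE y).add (hG y)
    exact this.congr_deriv (by simp)
  have hconst : ∀ y, F y = F x := by
    intro y
    exact is_const_of_deriv_eq_zero (fun z => (hF z).differentiableAt)
      (fun z => (hF z).deriv) y x
  -- limit of F at +∞
  have hGlim : Tendsto G atTop (nhds (∫ t in Ioi x, u t ^ 2)) :=
    MeasureTheory.intervalIntegral_tendsto_integral_Ioi x (hint x) tendsto_id
  have hElim : Tendsto E atTop (nhds 0) := by
    have := ((h2.pow 2).sub (h1.pow 4)).sub h3
    simpa using this
  have hFlim : Tendsto F atTop (nhds (∫ t in Ioi x, u t ^ 2)) := by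
    have := hElim.add hGlim
    simpa using this
  have hFx : Tendsto F atTop (nhds (F x)) := by
    rw [show F = fun _ => F x from funext hconst]
    exact tendsto_const_nhds
  have key : F x = ∫ t in Ioi x, u t ^ 2 := tendsto_nhds_unique hFx hFlim
  have hGx : G x = 0 := by simp [hGdef]
  have : E x + G x = ∫ t in Ioi x, u t ^ 2 := key
  rw [hGx] at this
  simp only [hEdef] at this
  linarith
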